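/- In the symmetric case of the deterministic limit of the zealot model with reinforcement, with μ > 0, n ∈ (0, 1/2), and ϑ ∈ (0, ϑ_p) where ϑ_p = (1−2n)/(1+2n), there exists a stationary point strictly between 0 and 1/2: there is an x ∈ (0, 1/2) with F_{n,ϑ}(x) = 0 (and by the odd symmetry of F_{n,ϑ} about 1/2, also F_{n,ϑ}(1−x) = 0), so below the bifurcation value the ODE has at least three stationary points in (0,1). -/

import Mathlib

/-- The symmetric deterministic-limit drift of the zealot model with
reinforcement: `F_{n,ϑ}(x)` with rethinking rate `μ`, zealot ratio `n`,
and reinforcement weight `ϑ`. -/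
noncomputable def Fsym (μ n ϑ x : ℝ) : ℝ :=
  μ * (1 - x) * (ϑ * (x + n)) / (ϑ * (x + n) + (1 - x + n))
    - μ * x * (ϑ * (1 - x + n)) / ((x + n) + ϑ * (1 - x + n))

lemma Fsym_eq_zero_of_key (μ n ϑ x : ℝ)
    (h1 : ϑ * (x + n) + (1 - x + n) ≠ 0)
    (h2 : (x + n) + ϑ * (1 - x + n) ≠ 0)
    (hid : (1 - ϑ) * (1 - 2 * x) ^ 2 + (1 + 2 * n) ^ 2 * (1 + ϑ) - 2 * (1 + 2 * n) = 0) :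
    Fsym μ n ϑ x = 0 := by
  unfold Fsym
  rw [div_sub_div _ _ h1 h2, div_eq_zero_iff]
  left
  linear_combination (μ * ϑ * (1 - 2 * x) / 4) * hid

/-- With `μ > 0`, `n ∈ (0, 1/2)` and `ϑ ∈ (0, ϑ_p)` where
`ϑ_p = (1−2n)/(1+2n)`, there exists a stationary point strictly between `0`
and `1/2`: some `x ∈ (0, 1/2)` with `F_{n,ϑ}(x) = 0`, and by odd symmetry also
`F_{n,ϑ}(1−x) = 0` — so below the bifurcation value the ODE has at least three
stationary points in `(0,1)`. -/
theorem exists_stationary_below_bifurcation (μ n ϑ : ℝ) (hμ : 0 < μ)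
    (hn : n ∈ Set.Ioo (0 : ℝ) (1 / 2))
    (hϑ : ϑ ∈ Set.Ioo (0 : ℝ) ((1 - 2 * n) / (1 + 2 * n))) :
    ∃ x ∈ Set.Ioo (0 : ℝ) (1 / 2), Fsym μ n ϑ x = 0 ∧ Fsym μ n ϑ (1 - x) = 0 := by
  obtain ⟨hn0, hn2⟩ := hn
  obtain ⟨hϑ0, hϑp⟩ := hϑ
  have hden : (0 : ℝ) < 1 + 2 * n := by linarith
  have hϑp' : ϑ * (1 + 2 * n) < 1 - 2 * n := (lt_div_iff₀ hden).mp hϑp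
  have hϑ1 : ϑ < 1 := by nlinarith
  -- the squared offset
  set A : ℝ := (2 * (1 + 2 * n) - (1 + 2 * n) ^ 2 * (1 + ϑ)) / (1 - ϑ) with hA
  have hApos : 0 < A := by
    apply div_pos
    · nlinarith
    · linarith
  have hAlt1 : A < 1 := by
    rw [hA, div_lt_one (by linarith)]
    nlinarith [mul_pos hϑ0 hn0, mul_pos hn0 hn0]
  set u : ℝ := Real.sqrt A with hu
  have hu0 : 0 < u := Real.sqrt_pos.mpr hApos
  have hu1 : u < 1 := by
    rw [hu, show (1 : ℝ) = Real.sqrt 1 by simp]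
    exact Real.sqrt_lt_sqrt hApos.le hAlt1
  have husq : u ^ 2 = A := Real.sq_sqrt hApos.le
  set x : ℝ := (1 - u) / 2 with hx
  have hx0 : 0 < x := by rw [hx]; linarith
  have hx2 : x < 1 / 2 := by rw [hx]; linarith
  have hid : (1 - ϑ) * (1 - 2 * x) ^ 2 + (1 + 2 * n) ^ 2 * (1 + ϑ) - 2 * (1 + 2 * n) = 0 := by
    have h12x : 1 - 2 * x = u := by rw [hx]; ring
    have hne : (1 - ϑ) ≠ 0 := by linarith
    rw [h12x, husq, hA]
    field_simp
    ring
  have hid' : (1 - ϑ) * (1 - 2 * (1 - x)) ^ 2 + (1 + 2 * n) ^ 2 * (1 + ϑ) - 2 * (1 + 2 * n) = 0 := by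
    nlinarith [hid]
  refine ⟨x, ⟨hx0, hx2⟩, ?_, ?_⟩
  · exact Fsym_eq_zero_of_key μ n ϑ x (by nlinarith) (by nlinarith) hid
  · exact Fsym_eq_zero_of_key μ n ϑ (1 - x) (by nlinarith) (by nlinarith) hid'
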